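/- Let N ≥ 1 and 1 ≤ K ≤ N, with profits r_i ∈ (0,1] for i ∈ [N]. Let D be a convex set of functions ℝ → ℝ containing the CDF F(S,u) for every S ⊆ [N] with |S| ≤ K and every u ∈ [0,1]^N, and let U be a functional that is quasiconvex on D and satisfies the one-sided Lipschitz condition: there is γ̃₂ > 0 such that for all S ⊆ [N] with |S| ≤ K and all u, u' ∈ [0,1]^N with u'_i ≥ u_i for all i, U(F(S,u')) − U(F(S,u)) ≤ (γ̃₂ / (1 + Σ_{i∈S} u'_i)) · Σ_{i∈S}(u'_i − u_i). Let v, v' ∈ [0,1]^N be arbitrary, and let S* be an assortment of minimum cardinality among all S ⊆ [N] with |S| ≤ K maximizing U(F(S,v)). Then U(F(S*,v)) − U(F(S*,v')) ≤ (γ̃₂ / (1 + Σ_{i∈S*} max{v_i, v'_i})) · Σ_{i∈S*} |v'_i − v_i|. -/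

import Mathlib

/-- The CDF of the purchase-profit distribution of the MNL model with assortment `S`,
profits `r` and preference vector `v`. -/
noncomputable def mnlCDF {ι : Type*} (S : Finset ι) (r v : ι → ℝ) (x : ℝ) : ℝ :=
  if x < 0 then 0
  else (1 + ∑ i ∈ S.filter (fun i => r i ≤ x), v i) / (1 + ∑ i ∈ S, v i)

lemma mnlCDF_congr {ι : Type*} (S : Finset ι) (r u u' : ι → ℝ)
    (h : ∀ i ∈ S, u i = u' i) : mnlCDF S r u = mnlCDF S r u' := by
  funext x
  unfold mnlCDF
  by_cases hx : x < 0
  · simp [hx]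
  · rw [if_neg hx, if_neg hx,
      Finset.sum_congr rfl (fun i hi => h i (Finset.filter_subset _ _ hi)),
      Finset.sum_congr rfl h]

lemma mnlCDF_erase_of_zero {ι : Type*} [DecidableEq ι] (S : Finset ι) (r u : ι → ℝ)
    (i : ι) (hi : i ∈ S) (h0 : u i = 0) :
    mnlCDF (S.erase i) r u = mnlCDF S r u := by
  funext x
  unfold mnlCDF
  by_cases hx : x < 0
  · simp [hx]
  · rw [if_neg hx, if_neg hx]
    congr 2
    · rw [Finset.filter_erase]
      exact Finset.sum_erase _ h0
    · exact Finset.sum_erase _ h0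

lemma mnlCDF_erase_apply {ι : Type*} [DecidableEq ι] (S : Finset ι) (r u : ι → ℝ)
    (i : ι) (hi : i ∈ S) (x : ℝ) (hx : ¬ x < 0) :
    mnlCDF (S.erase i) r u x =
      (1 + ((∑ j ∈ S.filter (fun j => r j ≤ x), u j) - (if r i ≤ x then u i else 0))) /
        ((1 + ∑ j ∈ S, u j) - u i) := by
  unfold mnlCDF
  rw [if_neg hx]
  have hden : ∑ j ∈ S.erase i, u j = (∑ j ∈ S, u j) - u i := Finset.sum_erase_eq_sub hi
  have hnum : ∑ j ∈ (S.erase i).filter (fun j => r j ≤ x), u j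
      = (∑ j ∈ S.filter (fun j => r j ≤ x), u j) - (if r i ≤ x then u i else 0) := by
    rw [Finset.filter_erase]
    by_cases hri : r i ≤ x
    · rw [if_pos hri]
      exact Finset.sum_erase_eq_sub (Finset.mem_filter.mpr ⟨hi, hri⟩)
    · have hni : i ∉ S.filter (fun j => r j ≤ x) :=
        fun hmem => hri (Finset.mem_filter.mp hmem).2
      rw [if_neg hri, sub_zero, Finset.erase_eq_of_notMem hni]
  rw [hnum, hden]
  congr 1
  ring

lemma quasiconvex_combo {ι : Type*} [DecidableEq ι] (Dset : Set (ℝ → ℝ)) (hDconv : Convex ℝ Dset)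
    (U : (ℝ → ℝ) → ℝ)
    (hU : ∀ F G : ℝ → ℝ, F ∈ Dset → G ∈ Dset → ∀ l : ℝ, 0 ≤ l → l ≤ 1 →
      U (l • F + (1 - l) • G) ≤ max (U F) (U G))
    (b : ℝ) (G₀ : ℝ → ℝ) (hG₀ : G₀ ∈ Dset) (hUG₀ : U G₀ ≤ b)
    (M : Finset ι) :
    ∀ (G : ι → ℝ → ℝ) (l₀ : ℝ) (lam : ι → ℝ),
      (∀ i ∈ M, G i ∈ Dset) → (∀ i ∈ M, U (G i) ≤ b) →
      0 ≤ l₀ → (∀ i ∈ M, 0 ≤ lam i) → l₀ + ∑ i ∈ M, lam i = 1 →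
      (l₀ • G₀ + ∑ i ∈ M, lam i • G i) ∈ Dset ∧ U (l₀ • G₀ + ∑ i ∈ M, lam i • G i) ≤ b := by
  induction M using Finset.induction_on with
  | empty =>
      intro G l₀ lam _ _ _ _ hsum
      rw [Finset.sum_empty, add_zero] at hsum
      rw [Finset.sum_empty, add_zero, hsum, one_smul]
      exact ⟨hG₀, hUG₀⟩
  | @insert j M hj ih =>
      intro G l₀ lam hGmem hGb hl₀ hlam hsum
      rw [Finset.sum_insert hj] at hsum ⊢
      have hsumnn : (0:ℝ) ≤ ∑ i ∈ M, lam i :=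
        Finset.sum_nonneg (fun i hi => hlam i (Finset.mem_insert_of_mem hi))
      have hlamj : 0 ≤ lam j := hlam j (Finset.mem_insert_self _ _)
      by_cases hs0 : l₀ + ∑ i ∈ M, lam i = 0
      · have hl₀0 : l₀ = 0 := by linarith
        have hlamM : ∀ i ∈ M, lam i = 0 := by
          have hsum0 : ∑ i ∈ M, lam i = 0 := by linarith
          exact (Finset.sum_eq_zero_iff_of_nonneg
            (fun i hi => hlam i (Finset.mem_insert_of_mem hi))).mp hsum0
        have hlamj1 : lam j = 1 := by linarith
        have hfun : l₀ • G₀ + (lam j • G j + ∑ i ∈ M, lam i • G i) = G j := by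
          rw [hl₀0, hlamj1, zero_smul, one_smul,
            Finset.sum_eq_zero (fun i hi => by rw [hlamM i hi, zero_smul])]
          simp
        rw [hfun]
        exact ⟨hGmem j (Finset.mem_insert_self _ _), hGb j (Finset.mem_insert_self _ _)⟩
      · have hspos : (0:ℝ) < l₀ + ∑ i ∈ M, lam i :=
          lt_of_le_of_ne (by linarith) (Ne.symm hs0)
        obtain ⟨Hmem, Hb⟩ := ih G (l₀ / (l₀ + ∑ i ∈ M, lam i))
          (fun i => lam i / (l₀ + ∑ i ∈ M, lam i))
          (fun i hi => hGmem i (Finset.mem_insert_of_mem hi))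
          (fun i hi => hGb i (Finset.mem_insert_of_mem hi))
          (div_nonneg hl₀ hspos.le)
          (fun i hi => div_nonneg (hlam i (Finset.mem_insert_of_mem hi)) hspos.le)
          (by rw [← Finset.sum_div, ← add_div, div_self hs0])
        have h2 : (1 - lam j) • ((l₀ / (l₀ + ∑ i ∈ M, lam i)) • G₀ +
            ∑ i ∈ M, (lam i / (l₀ + ∑ i ∈ M, lam i)) • G i)
            = l₀ • G₀ + ∑ i ∈ M, lam i • G i := by
          have h1 : 1 - lam j = l₀ + ∑ i ∈ M, lam i := by linarith
          rw [h1, smul_add, Finset.smul_sum]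
          congr 1
          · rw [smul_smul]
            congr 1
            field_simp
          · exact Finset.sum_congr rfl (fun i _ => by
              rw [smul_smul]
              congr 1
              field_simp)
        have hrw : l₀ • G₀ + (lam j • G j + ∑ i ∈ M, lam i • G i)
            = lam j • G j + (1 - lam j) • ((l₀ / (l₀ + ∑ i ∈ M, lam i)) • G₀ +
              ∑ i ∈ M, (lam i / (l₀ + ∑ i ∈ M, lam i)) • G i) := by
          rw [h2]
          abel
        rw [hrw]
        have hlamj1 : lam j ≤ 1 := by linarith
        refine ⟨hDconv (hGmem j (Finset.mem_insert_self _ _)) Hmem hlamj (by linarith)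
          (by ring), ?_⟩
        exact le_trans (hU (G j) _ (hGmem j (Finset.mem_insert_self _ _)) Hmem
          (lam j) hlamj hlamj1) (max_le (hGb j (Finset.mem_insert_self _ _)) Hb)

lemma mono_at_optimal {ι : Type*} [DecidableEq ι] (K : ℕ) (r : ι → ℝ)
    (Dset : Set (ℝ → ℝ)) (hDconv : Convex ℝ Dset)
    (hDF : ∀ S : Finset ι, S.card ≤ K → ∀ u : ι → ℝ,
      (∀ i, 0 ≤ u i ∧ u i ≤ 1) → mnlCDF S r u ∈ Dset)
    (U : (ℝ → ℝ) → ℝ)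
    (hU : ∀ F G : ℝ → ℝ, F ∈ Dset → G ∈ Dset → ∀ l : ℝ, 0 ≤ l → l ≤ 1 →
      U (l • F + (1 - l) • G) ≤ max (U F) (U G))
    (v : ι → ℝ) (hv : ∀ i, 0 ≤ v i ∧ v i ≤ 1)
    (Sstar : Finset ι) (hScard : Sstar.card ≤ K)
    (hSmax : ∀ S : Finset ι, S.card ≤ K → U (mnlCDF S r v) ≤ U (mnlCDF Sstar r v))
    (hSmin : ∀ S : Finset ι, S.card ≤ K →
      (∀ S' : Finset ι, S'.card ≤ K → U (mnlCDF S' r v) ≤ U (mnlCDF S r v)) →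
      Sstar.card ≤ S.card)
    (w : ι → ℝ) (hw : ∀ i, 0 ≤ w i ∧ w i ≤ 1) (hvw : ∀ i, v i ≤ w i) :
    U (mnlCDF Sstar r v) ≤ U (mnlCDF Sstar r w) := by
  classical
  by_cases hM : (Sstar.filter (fun i => v i < w i)).Nonempty
  swap
  · have hall : ∀ i ∈ Sstar, w i = v i := by
      intro i hi
      by_contra hne
      exact hM ⟨i, Finset.mem_filter.mpr ⟨hi, lt_of_le_of_ne (hvw i) (Ne.symm hne)⟩⟩
    rw [mnlCDF_congr Sstar r w v hall]
  · set M := Sstar.filter (fun i => v i < w i) with hMdef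
    have hMS : M ⊆ Sstar := Finset.filter_subset _ _
    -- every coordinate in Sstar is positive
    have hvpos : ∀ i ∈ Sstar, 0 < v i := by
      intro i hi
      rcases lt_or_eq_of_le (hv i).1 with h | h
      · exact h
      · exfalso
        have heq : mnlCDF (Sstar.erase i) r v = mnlCDF Sstar r v :=
          mnlCDF_erase_of_zero _ _ _ _ hi h.symm
        have hcard' : (Sstar.erase i).card ≤ K :=
          le_trans (Finset.card_le_card (Finset.erase_subset _ _)) hScard
        have hopt : ∀ S' : Finset ι, S'.card ≤ K →
            U (mnlCDF S' r v) ≤ U (mnlCDF (Sstar.erase i) r v) := by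
          rw [heq]; exact hSmax
        have hmin := hSmin (Sstar.erase i) hcard' hopt
        have hlt := Finset.card_erase_lt_of_mem hi
        omega
    -- strict suboptimality of proper sub-assortments
    have hstrict : ∀ i ∈ Sstar,
        U (mnlCDF (Sstar.erase i) r v) < U (mnlCDF Sstar r v) := by
      intro i hi
      have hcard' : (Sstar.erase i).card ≤ K :=
        le_trans (Finset.card_le_card (Finset.erase_subset _ _)) hScard
      rcases lt_or_eq_of_le (hSmax _ hcard') with h | h
      · exact h
      · exfalso
        have hopt : ∀ S' : Finset ι, S'.card ≤ K →
            U (mnlCDF S' r v) ≤ U (mnlCDF (Sstar.erase i) r v) := by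
          rw [h]; exact hSmax
        have hmin := hSmin (Sstar.erase i) hcard' hopt
        have hlt := Finset.card_erase_lt_of_mem hi
        omega
    -- numeric facts
    have hδpos : ∀ i ∈ M, 0 < w i - v i := fun i hi =>
      sub_pos.mpr (Finset.mem_filter.mp hi).2
    set σ : ℝ := ∑ i ∈ M, (w i - v i) / v i with hσdef
    have hσpos : 0 < σ :=
      Finset.sum_pos (fun i hi => div_pos (hδpos i hi) (hvpos i (hMS hi))) hM
    have hDvpos : (0:ℝ) < 1 + ∑ i ∈ Sstar, v i := by
      have : (0:ℝ) ≤ ∑ i ∈ Sstar, v i := Finset.sum_nonneg fun i _ => (hv i).1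
      linarith
    have hDwpos : (0:ℝ) < 1 + ∑ i ∈ Sstar, w i := by
      have : (0:ℝ) ≤ ∑ i ∈ Sstar, w i := Finset.sum_nonneg fun i _ => (hw i).1
      linarith
    have h1σpos : (0:ℝ) < 1 + σ := by linarith
    have hQpos : (0:ℝ) < (1 + σ) * (1 + ∑ i ∈ Sstar, v i) := mul_pos h1σpos hDvpos
    have hQne : ((1 + σ) * (1 + ∑ i ∈ Sstar, v i)) ≠ 0 := ne_of_gt hQpos
    have hDvne : (1 + ∑ i ∈ Sstar, v i) ≠ 0 := ne_of_gt hDvpos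
    have hDwne : (1 + ∑ i ∈ Sstar, w i) ≠ 0 := ne_of_gt hDwpos
    have h1σne : (1 + σ) ≠ 0 := ne_of_gt h1σpos
    have hDvipos : ∀ i ∈ Sstar, (0:ℝ) < (1 + ∑ j ∈ Sstar, v j) - v i := by
      intro i hi
      have h1 : (1 + ∑ j ∈ Sstar, v j) - v i = 1 + ∑ j ∈ Sstar.erase i, v j := by
        rw [Finset.sum_erase_eq_sub hi]; ring
      have h2 : (0:ℝ) ≤ ∑ j ∈ Sstar.erase i, v j :=
        Finset.sum_nonneg fun j hj => (hv j).1
      rw [h1]; linarith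
    -- coefficients
    have hl0nn : 0 ≤ (1 + ∑ i ∈ Sstar, w i) / ((1 + σ) * (1 + ∑ i ∈ Sstar, v i)) :=
      div_nonneg hDwpos.le hQpos.le
    have hlamnn : ∀ i ∈ M, 0 ≤ ((w i - v i) / v i) *
        (((1 + ∑ j ∈ Sstar, v j) - v i) / ((1 + σ) * (1 + ∑ j ∈ Sstar, v j))) := fun i hi =>
      mul_nonneg (div_nonneg (hδpos i hi).le (hvpos i (hMS hi)).le)
        (div_nonneg (hDvipos i (hMS hi)).le hQpos.le)
    -- sum of w-v over M equals over Sstar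
    have hDwv : (1 + ∑ i ∈ Sstar, w i) = (1 + ∑ i ∈ Sstar, v i) + ∑ i ∈ M, (w i - v i) := by
      have h1 : ∑ i ∈ M, (w i - v i) = ∑ i ∈ Sstar, (w i - v i) := by
        apply Finset.sum_subset hMS
        intro i hi hni
        have hwle : ¬ v i < w i := fun hlt => hni (Finset.mem_filter.mpr ⟨hi, hlt⟩)
        have : w i = v i := le_antisymm (not_lt.mp hwle) (hvw i)
        rw [this, sub_self]
      rw [h1, Finset.sum_sub_distrib]
      ring
    -- the weights sum to one
    have hterm : ∀ i ∈ M, ((w i - v i) / v i) *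
        (((1 + ∑ j ∈ Sstar, v j) - v i) / ((1 + σ) * (1 + ∑ j ∈ Sstar, v j)))
        = ((w i - v i) / v i * (1 + ∑ j ∈ Sstar, v j) - (w i - v i)) /
            ((1 + σ) * (1 + ∑ j ∈ Sstar, v j)) := by
      intro i hi
      have hvne : v i ≠ 0 := ne_of_gt (hvpos i (hMS hi))
      field_simp
    have hsum1 : (1 + ∑ i ∈ Sstar, w i) / ((1 + σ) * (1 + ∑ i ∈ Sstar, v i)) +
        ∑ i ∈ M, ((w i - v i) / v i) *
          (((1 + ∑ j ∈ Sstar, v j) - v i) / ((1 + σ) * (1 + ∑ j ∈ Sstar, v j))) = 1 := by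
      rw [Finset.sum_congr rfl hterm, ← Finset.sum_div, Finset.sum_sub_distrib,
        ← Finset.sum_mul, ← hσdef, ← add_div, hDwv]
      rw [show ((1 + ∑ i ∈ Sstar, v i) + ∑ i ∈ M, (w i - v i)) +
          (σ * (1 + ∑ j ∈ Sstar, v j) - ∑ i ∈ M, (w i - v i))
          = (1 + σ) * (1 + ∑ i ∈ Sstar, v i) from by ring]
      exact div_self hQne
    -- the convex combination identity
    have hcombo : mnlCDF Sstar r v =
        ((1 + ∑ i ∈ Sstar, w i) / ((1 + σ) * (1 + ∑ i ∈ Sstar, v i))) • mnlCDF Sstar r w +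
        ∑ i ∈ M, (((w i - v i) / v i) *
          (((1 + ∑ j ∈ Sstar, v j) - v i) / ((1 + σ) * (1 + ∑ j ∈ Sstar, v j)))) •
            mnlCDF (Sstar.erase i) r v := by
      funext x
      simp only [Pi.add_apply, Pi.smul_apply, Finset.sum_apply, smul_eq_mul]
      by_cases hx : x < 0
      · simp [mnlCDF, hx]
      · have hAw : ∑ i ∈ Sstar.filter (fun i => r i ≤ x), w i
            = (∑ i ∈ Sstar.filter (fun i => r i ≤ x), v i) +
              ∑ i ∈ M.filter (fun i => r i ≤ x), (w i - v i) := by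
          have e1 : ∑ i ∈ Sstar.filter (fun i => r i ≤ x), w i
              = (∑ i ∈ Sstar.filter (fun i => r i ≤ x), v i) +
                ∑ i ∈ Sstar.filter (fun i => r i ≤ x), (w i - v i) := by
            rw [← Finset.sum_add_distrib]
            exact Finset.sum_congr rfl (fun i _ => by ring)
          rw [e1]
          congr 1
          symm
          apply Finset.sum_subset (Finset.filter_subset_filter _ hMS)
          intro i hiS hniM
          have hiSstar := (Finset.mem_filter.mp hiS).1
          have hpi := (Finset.mem_filter.mp hiS).2
          have hniM' : i ∉ M := fun hiM => hniM (Finset.mem_filter.mpr ⟨hiM, hpi⟩)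
          have hwle : ¬ v i < w i := fun hlt =>
            hniM' (Finset.mem_filter.mpr ⟨hiSstar, hlt⟩)
          have : w i = v i := le_antisymm (not_lt.mp hwle) (hvw i)
          rw [this, sub_self]
        have hterm2 : ∀ i ∈ M, (((w i - v i) / v i) *
            (((1 + ∑ j ∈ Sstar, v j) - v i) / ((1 + σ) * (1 + ∑ j ∈ Sstar, v j)))) *
              mnlCDF (Sstar.erase i) r v x
            = ((w i - v i) / v i * (1 + ∑ j ∈ Sstar.filter (fun j => r j ≤ x), v j) -
                (if r i ≤ x then w i - v i else 0)) /
                ((1 + σ) * (1 + ∑ j ∈ Sstar, v j)) := by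
          intro i hi
          have hvne : v i ≠ 0 := ne_of_gt (hvpos i (hMS hi))
          have hDvine : ((1 + ∑ j ∈ Sstar, v j) - v i) ≠ 0 :=
            ne_of_gt (hDvipos i (hMS hi))
          rw [mnlCDF_erase_apply Sstar r v i (hMS hi) x hx]
          by_cases hri : r i ≤ x
          · rw [if_pos hri, if_pos hri]
            field_simp
            ring
          · rw [if_neg hri, if_neg hri]
            field_simp
            ring
        have hsplit : ∑ i ∈ M, ((w i - v i) / v i *
              (1 + ∑ j ∈ Sstar.filter (fun j => r j ≤ x), v j) -
              (if r i ≤ x then w i - v i else 0))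
            = σ * (1 + ∑ j ∈ Sstar.filter (fun j => r j ≤ x), v j) -
              ∑ i ∈ M.filter (fun i => r i ≤ x), (w i - v i) := by
          rw [Finset.sum_sub_distrib, ← Finset.sum_mul, ← hσdef, ← Finset.sum_filter]
        rw [Finset.sum_congr rfl hterm2]
        simp only [mnlCDF, if_neg hx]
        rw [← Finset.sum_div, hsplit, hAw]
        field_simp
        ring
    -- apply the quasiconvexity bound
    have hGmem : ∀ i ∈ M, mnlCDF (Sstar.erase i) r v ∈ Dset := fun i _ =>
      hDF _ (le_trans (Finset.card_le_card (Finset.erase_subset _ _)) hScard) v hv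
    obtain ⟨_, hUb⟩ := quasiconvex_combo Dset hDconv U hU
      (max (U (mnlCDF Sstar r w)) (M.sup' hM (fun i => U (mnlCDF (Sstar.erase i) r v))))
      (mnlCDF Sstar r w) (hDF Sstar hScard w hw) (le_max_left _ _)
      M (fun i => mnlCDF (Sstar.erase i) r v)
      ((1 + ∑ i ∈ Sstar, w i) / ((1 + σ) * (1 + ∑ i ∈ Sstar, v i)))
      (fun i => ((w i - v i) / v i) *
        (((1 + ∑ j ∈ Sstar, v j) - v i) / ((1 + σ) * (1 + ∑ j ∈ Sstar, v j))))
      hGmem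
      (fun i hi => le_trans
        (Finset.le_sup' (fun i => U (mnlCDF (Sstar.erase i) r v)) hi) (le_max_right _ _))
      hl0nn hlamnn hsum1
    rw [← hcombo] at hUb
    rcases le_total (M.sup' hM (fun i => U (mnlCDF (Sstar.erase i) r v)))
        (U (mnlCDF Sstar r w)) with hc | hc
    · rwa [max_eq_left hc] at hUb
    · rw [max_eq_right hc] at hUb
      have hlt : M.sup' hM (fun i => U (mnlCDF (Sstar.erase i) r v)) <
          U (mnlCDF Sstar r v) :=
        (Finset.sup'_lt_iff hM).mpr (fun i hi => hstrict i (hMS hi))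
      linarith

/-- **Proposition (two-sided Lipschitz bound at the optimal assortment).**
If `U` is quasiconvex on a convex set `D` containing all the MNL CDFs and satisfies the
one-sided Lipschitz condition with constant `γ̃₂`, and `S*` is a minimum-cardinality optimal
assortment for `v` under the cardinality constraint `K`, then for any `v'`:
`U(F(S*,v)) − U(F(S*,v')) ≤ (γ̃₂/(1+∑_{i∈S*} max{v i, v' i})) ∑_{i∈S*} |v' i − v i|`. -/
theorem lipschitz_at_optimal (N K : ℕ) (hN : 1 ≤ N) (hK1 : 1 ≤ K) (hKN : K ≤ N)
    (r : Fin N → ℝ) (hr : ∀ i, 0 < r i ∧ r i ≤ 1)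
    (Dset : Set (ℝ → ℝ)) (hDconv : Convex ℝ Dset)
    (hDF : ∀ S : Finset (Fin N), S.card ≤ K → ∀ u : Fin N → ℝ,
      (∀ i, 0 ≤ u i ∧ u i ≤ 1) → mnlCDF S r u ∈ Dset)
    (U : (ℝ → ℝ) → ℝ)
    (hU : ∀ F G : ℝ → ℝ, F ∈ Dset → G ∈ Dset → ∀ l : ℝ, 0 ≤ l → l ≤ 1 →
      U (l • F + (1 - l) • G) ≤ max (U F) (U G))
    (γ : ℝ) (hγ : 0 < γ)
    (hLip : ∀ S : Finset (Fin N), S.card ≤ K → ∀ u u' : Fin N → ℝ,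
      (∀ i, 0 ≤ u i ∧ u i ≤ 1) → (∀ i, 0 ≤ u' i ∧ u' i ≤ 1) → (∀ i, u i ≤ u' i) →
      U (mnlCDF S r u') - U (mnlCDF S r u) ≤
        (γ / (1 + ∑ i ∈ S, u' i)) * ∑ i ∈ S, (u' i - u i))
    (v v' : Fin N → ℝ) (hv : ∀ i, 0 ≤ v i ∧ v i ≤ 1) (hv' : ∀ i, 0 ≤ v' i ∧ v' i ≤ 1)
    (Sstar : Finset (Fin N)) (hScard : Sstar.card ≤ K)
    (hSmax : ∀ S : Finset (Fin N), S.card ≤ K → U (mnlCDF S r v) ≤ U (mnlCDF Sstar r v))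
    (hSmin : ∀ S : Finset (Fin N), S.card ≤ K →
      (∀ S' : Finset (Fin N), S'.card ≤ K → U (mnlCDF S' r v) ≤ U (mnlCDF S r v)) →
      Sstar.card ≤ S.card) :
    U (mnlCDF Sstar r v) - U (mnlCDF Sstar r v') ≤
      (γ / (1 + ∑ i ∈ Sstar, max (v i) (v' i))) * ∑ i ∈ Sstar, |v' i - v i| := by
  set w : Fin N → ℝ := fun i => max (v i) (v' i) with hwdef
  have hw : ∀ i, 0 ≤ w i ∧ w i ≤ 1 := fun i =>
    ⟨le_trans (hv i).1 (le_max_left _ _), max_le (hv i).2 (hv' i).2⟩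
  have hvw : ∀ i, v i ≤ w i := fun i => le_max_left _ _
  have hv'w : ∀ i, v' i ≤ w i := fun i => le_max_right _ _
  have hDw : (0:ℝ) < 1 + ∑ i ∈ Sstar, w i := by
    have : (0:ℝ) ≤ ∑ i ∈ Sstar, w i := Finset.sum_nonneg fun i _ => (hw i).1
    linarith
  have key : U (mnlCDF Sstar r v) ≤ U (mnlCDF Sstar r w) :=
    mono_at_optimal K r Dset hDconv hDF U hU v hv Sstar hScard hSmax hSmin w hw hvw
  have h2 := hLip Sstar hScard v' w hv' hw hv'w
  have hterm : ∀ i ∈ Sstar, w i - v' i ≤ |v' i - v i| := by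
    intro i _
    rcases le_total (v i) (v' i) with h | h
    · have hwi : w i = v' i := max_eq_right h
      rw [hwi, sub_self]
      exact abs_nonneg _
    · have hwi : w i = v i := max_eq_left h
      rw [hwi, abs_sub_comm]
      exact le_abs_self _
  have h3 : γ / (1 + ∑ i ∈ Sstar, w i) * ∑ i ∈ Sstar, (w i - v' i)
      ≤ γ / (1 + ∑ i ∈ Sstar, w i) * ∑ i ∈ Sstar, |v' i - v i| :=
    mul_le_mul_of_nonneg_left (Finset.sum_le_sum hterm) (div_nonneg hγ.le hDw.le)
  linarith
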